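/- Let N ≥ 2, β ∈ (0, N), and a ≥ 2·t₀^{N−β−γ₁} where γ₁ > N − β and t₀ ≥ 1. Define I(T) = ∫_{t₀}^{T} ( a^{1/(N−1)} − (a − τ^{N−β−γ₁})^{1/(N−1)} ) / τ dτ for T > t₀. Then 0 ≤ I(T) ≤ (1/((N−1)(γ₁ − N + β))) · t₀^{(N−β−γ₁)·(2−N)/(N−1)} · t₀^{N−β−γ₁} / 1, i.e., I(T) is bounded above by a constant independent of T; in particular sup_{T > t₀} I(T) < ∞. -/

import Mathlib

open Real intervalIntegral

/-- MVT/Bernoulli-type inequality: for `0 < b ≤ a` and `0 ≤ p ≤ 1`,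
`a^p - b^p ≤ p * (a - b) * b^(p-1)`. -/
lemma rpow_sub_rpow_le_aux {a b p : ℝ} (hb : 0 < b) (hba : b ≤ a) (hp0 : 0 ≤ p)
    (hp1 : p ≤ 1) : a ^ p - b ^ p ≤ p * (a - b) * b ^ (p - 1) := by
  have hs : (-1 : ℝ) ≤ a / b - 1 := by
    have : 0 ≤ a / b := div_nonneg (hb.le.trans hba) hb.le
    linarith
  have hbern := rpow_one_add_le_one_add_mul_self hs hp0 hp1
  have h1 : (1 : ℝ) + (a / b - 1) = a / b := by ring
  rw [h1] at hbern
  have hdiv : (a / b) ^ p = a ^ p / b ^ p :=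
    Real.div_rpow (hb.le.trans hba) hb.le p
  rw [hdiv] at hbern
  have hbp : 0 < b ^ p := Real.rpow_pos_of_pos hb p
  have hb1 : b ^ (p - 1) = b ^ p / b := Real.rpow_sub_one hb.ne' p
  rw [hb1]
  have h2 : a ^ p ≤ (1 + p * (a / b - 1)) * b ^ p := by
    calc a ^ p = a ^ p / b ^ p * b ^ p := by field_simp
    _ ≤ (1 + p * (a / b - 1)) * b ^ p := by
        exact mul_le_mul_of_nonneg_right hbern hbp.le
  have h3 : (1 + p * (a / b - 1)) * b ^ p = b ^ p + p * (a - b) * (b ^ p / b) := by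
    field_simp
  linarith [h2.trans_eq h3]

theorem stmt16 (N : ℕ) (hN : 2 ≤ N) (β γ₁ t₀ a : ℝ) (hβ : 0 < β) (hβN : β < N)
    (hγ : (N : ℝ) - β < γ₁) (ht₀ : 1 ≤ t₀)
    (ha : 2 * t₀ ^ ((N : ℝ) - β - γ₁) ≤ a) :
    ∀ T : ℝ, t₀ < T →
      0 ≤ (∫ τ in t₀..T,
          (a ^ ((1 : ℝ) / (N - 1)) - (a - τ ^ ((N : ℝ) - β - γ₁)) ^ ((1 : ℝ) / (N - 1))) / τ) ∧
        (∫ τ in t₀..T,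
            (a ^ ((1 : ℝ) / (N - 1)) - (a - τ ^ ((N : ℝ) - β - γ₁)) ^ ((1 : ℝ) / (N - 1))) / τ) ≤
          1 / (((N : ℝ) - 1) * (γ₁ - N + β)) *
            t₀ ^ (((N : ℝ) - β - γ₁) * ((2 : ℝ) - N) / (N - 1)) *
            t₀ ^ ((N : ℝ) - β - γ₁) := by
  intro T hT
  set c : ℝ := (N : ℝ) - β - γ₁ with hc_def
  set p : ℝ := (1 : ℝ) / (N - 1) with hp_def
  have hN2 : (2 : ℝ) ≤ (N : ℝ) := by exact_mod_cast hN
  have hN1 : (1 : ℝ) ≤ (N : ℝ) - 1 := by linarith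
  have hp0 : 0 < p := by rw [hp_def]; positivity
  have hp1 : p ≤ 1 := by
    rw [hp_def]
    rw [div_le_one (by linarith)]
    linarith
  have hc : c < 0 := by rw [hc_def]; linarith
  have ht₀pos : 0 < t₀ := by linarith
  have ht₀c : 0 < t₀ ^ c := Real.rpow_pos_of_pos ht₀pos c
  have ha2 : 0 < a := by linarith
  -- pointwise facts on [t₀, T]
  have hτfacts : ∀ τ ∈ Set.Icc t₀ T, 0 < τ ∧ 0 < τ ^ c ∧ τ ^ c ≤ t₀ ^ c ∧
      t₀ ^ c ≤ a - τ ^ c := by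
    intro τ hτ
    have hτpos : 0 < τ := lt_of_lt_of_le ht₀pos hτ.1
    have hτc : 0 < τ ^ c := Real.rpow_pos_of_pos hτpos c
    have hle : τ ^ c ≤ t₀ ^ c := Real.rpow_le_rpow_of_nonpos ht₀pos hτ.1 hc.le
    exact ⟨hτpos, hτc, hle, by linarith⟩
  -- nonnegativity of integrand
  have hnonneg : ∀ τ ∈ Set.Icc t₀ T,
      0 ≤ (a ^ p - (a - τ ^ c) ^ p) / τ := by
    intro τ hτ
    obtain ⟨hτpos, hτc, _, hax⟩ := hτfacts τ hτ
    have : (a - τ ^ c) ^ p ≤ a ^ p :=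
      Real.rpow_le_rpow (by linarith) (by linarith) hp0.le
    have := sub_nonneg.mpr this
    positivity
  -- continuity / integrability of integrand
  have hcontf : ContinuousOn (fun τ : ℝ => (a ^ p - (a - τ ^ c) ^ p) / τ)
      (Set.Icc t₀ T) := by
    apply ContinuousOn.div
    · apply ContinuousOn.sub continuousOn_const
      apply ContinuousOn.rpow_const
      · exact continuousOn_const.sub (ContinuousOn.rpow_const continuousOn_id
          fun x hx => Or.inl (ne_of_gt (lt_of_lt_of_le ht₀pos hx.1)))
      · intro x _; exact Or.inr hp0.le
    · exact continuousOn_id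
    · intro x hx; exact ne_of_gt (lt_of_lt_of_le ht₀pos hx.1)
  have hintf : IntervalIntegrable (fun τ : ℝ => (a ^ p - (a - τ ^ c) ^ p) / τ)
      MeasureTheory.volume t₀ T := by
    apply ContinuousOn.intervalIntegrable
    rwa [Set.uIcc_of_le hT.le]
  -- the comparison function
  set C : ℝ := p * t₀ ^ (c * (p - 1)) with hC_def
  have hC0 : 0 < C := by rw [hC_def]; positivity
  have hcontg : ContinuousOn (fun τ : ℝ => C * τ ^ (c - 1)) (Set.Icc t₀ T) := by
    apply ContinuousOn.mul continuousOn_const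
    exact ContinuousOn.rpow_const continuousOn_id
      fun x hx => Or.inl (ne_of_gt (lt_of_lt_of_le ht₀pos hx.1))
  have hintg : IntervalIntegrable (fun τ : ℝ => C * τ ^ (c - 1))
      MeasureTheory.volume t₀ T := by
    apply ContinuousOn.intervalIntegrable
    rwa [Set.uIcc_of_le hT.le]
  -- pointwise upper bound
  have hle : ∀ τ ∈ Set.Icc t₀ T,
      (a ^ p - (a - τ ^ c) ^ p) / τ ≤ C * τ ^ (c - 1) := by
    intro τ hτ
    obtain ⟨hτpos, hτc, hτt₀, hax⟩ := hτfacts τ hτ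
    have haxpos : 0 < a - τ ^ c := lt_of_lt_of_le ht₀c hax
    have key : a ^ p - (a - τ ^ c) ^ p ≤ p * τ ^ c * (a - τ ^ c) ^ (p - 1) := by
      have h := rpow_sub_rpow_le_aux (a := a) haxpos (by linarith) hp0.le hp1
      have he : a - (a - τ ^ c) = τ ^ c := by ring
      rw [he] at h
      linarith
    have h2 : (a - τ ^ c) ^ (p - 1) ≤ (t₀ ^ c) ^ (p - 1) :=
      Real.rpow_le_rpow_of_nonpos ht₀c hax (by linarith)
    have h3 : (t₀ ^ c) ^ (p - 1) = t₀ ^ (c * (p - 1)) :=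
      (Real.rpow_mul ht₀pos.le c (p - 1)).symm
    have h4 : a ^ p - (a - τ ^ c) ^ p ≤ p * τ ^ c * t₀ ^ (c * (p - 1)) := by
      calc a ^ p - (a - τ ^ c) ^ p ≤ p * τ ^ c * (a - τ ^ c) ^ (p - 1) := key
      _ ≤ p * τ ^ c * (t₀ ^ c) ^ (p - 1) := by
          apply mul_le_mul_of_nonneg_left h2; positivity
      _ = p * τ ^ c * t₀ ^ (c * (p - 1)) := by rw [h3]
    rw [div_le_iff₀ hτpos]
    have h5 : C * τ ^ (c - 1) * τ = p * τ ^ c * t₀ ^ (c * (p - 1)) := by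
      rw [hC_def, Real.rpow_sub_one hτpos.ne']
      field_simp
    linarith [h4.trans_eq h5.symm]
  constructor
  · apply intervalIntegral.integral_nonneg hT.le
    intro τ hτ; exact hnonneg τ hτ
  · have hmono : (∫ τ in t₀..T, (a ^ p - (a - τ ^ c) ^ p) / τ) ≤
        ∫ τ in t₀..T, C * τ ^ (c - 1) :=
      intervalIntegral.integral_mono_on hT.le hintf hintg hle
    have hcalc : (∫ τ in t₀..T, C * τ ^ (c - 1)) =
        C * ((T ^ c - t₀ ^ c) / c) := by
      rw [intervalIntegral.integral_const_mul]
      congr 1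
      rw [integral_rpow]
      · rw [sub_add_cancel]
      · right
        constructor
        · intro h; rw [sub_eq_iff_eq_add] at h; linarith [h]
        · rw [Set.uIcc_of_le hT.le]
          intro h
          linarith [h.1]
    have hTc : 0 < T ^ c := Real.rpow_pos_of_pos (by linarith) c
    have hfinal : C * ((T ^ c - t₀ ^ c) / c) ≤
        1 / (((N : ℝ) - 1) * (γ₁ - N + β)) * t₀ ^ (c * ((2 : ℝ) - N) / (N - 1)) *
          t₀ ^ c := by
      have hne : (N : ℝ) - 1 ≠ 0 := by linarith
      have hexp : c * (p - 1) = c * ((2 : ℝ) - N) / (N - 1) := by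
        have h1 : p - 1 = ((2 : ℝ) - N) / (N - 1) := by
          rw [hp_def, div_sub_one hne]
          congr 1
          ring
        rw [h1, mul_div_assoc]
      rw [hC_def, hexp]
      have hγc : γ₁ - N + β = -c := by rw [hc_def]; ring
      rw [hγc]
      have hnc : (0 : ℝ) < -c := by linarith
      have hdiv : (T ^ c - t₀ ^ c) / c ≤ t₀ ^ c / (-c) := by
        have e : (t₀ ^ c - T ^ c) / (-c) = (T ^ c - t₀ ^ c) / c := by
          rw [div_neg, ← neg_div, neg_sub]
        rw [← e]
        gcongr
        linarith
      have hD : 0 < t₀ ^ (c * ((2 : ℝ) - N) / (N - 1)) := Real.rpow_pos_of_pos ht₀pos _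
      calc p * t₀ ^ (c * ((2 : ℝ) - N) / (N - 1)) * ((T ^ c - t₀ ^ c) / c)
          ≤ p * t₀ ^ (c * ((2 : ℝ) - N) / (N - 1)) * (t₀ ^ c / (-c)) := by
            apply mul_le_mul_of_nonneg_left hdiv; positivity
        _ = 1 / (((N : ℝ) - 1) * (-c)) * t₀ ^ (c * ((2 : ℝ) - N) / (N - 1)) * t₀ ^ c := by
            rw [hp_def]; simp only [one_div, mul_inv]; ring
    linarith [hmono.trans_eq hcalc, hfinal]
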